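/- arXiv:1004.3395 — 3 statements merged into one kernel-verified Lean document; each statement's English description precedes it below -/
import Mathlib

section
/- Consider a multiset of n natural numbers (ids), all initially 0, evolving by steps: a step selects two elements with equal value v and replaces one of them by v + 1, subject to the constraint that v + 1 ≤ n - 1. Then every value that has ever appeared in the multiset remains present in the multiset at all later times. -/
/-- One step of the bounded id-assignment process: two elements share value `v`
with `v + 1 ≤ n - 1`, and one of them is replaced by `v + 1`. -/
def IdStep (n : ℕ) (M M' : Multiset ℕ) : Prop :=
  ∃ v, v + 1 ≤ n - 1 ∧ 2 ≤ M.count v ∧ M' = (v + 1) ::ₘ M.erase v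

lemma idstep_mem {n : ℕ} {M M' : Multiset ℕ} (h : IdStep n M M') :
    ∀ v ∈ M, v ∈ M' := by
  obtain ⟨w, -, hc, rfl⟩ := h
  intro v hv
  rw [Multiset.mem_cons]
  by_cases hvw : v = w
  · subst hvw
    right
    rw [← Multiset.count_pos, Multiset.count_erase_self]
    omega
  · right
    rwa [Multiset.mem_erase_of_ne hvw]

theorem id_values_persist (n : ℕ) (M M' : Multiset ℕ)
    (h0 : Relation.ReflTransGen (IdStep n) (Multiset.replicate n 0) M)
    (h : Relation.ReflTransGen (IdStep n) M M') :
    ∀ v ∈ M, v ∈ M' := by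
  induction h with
  | refl => exact fun v hv => hv
  | tail _ hstep ih => exact fun v hv => idstep_mem hstep v (ih v hv)
end

section
/- Consider a multiset of n natural numbers, all initially 0, evolving by steps in which two equal elements v < n - 1 are selected and one is replaced by v + 1. If the multiset contains the value n - 1, then the multiset equals {0, 1, ..., n - 1}, i.e., each value in {0,...,n-1} appears exactly once. -/
private lemma idstep_invariant (n : ℕ) (M : Multiset ℕ)
    (h : Relation.ReflTransGen (IdStep n) (Multiset.replicate n 0) M) :
    Multiset.card M = n ∧ ∀ u v : ℕ, v ∈ M → u < v → u ∈ M := by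
  induction h with
  | refl =>
    refine ⟨Multiset.card_replicate n 0, ?_⟩
    intro u v hv hu
    rw [Multiset.eq_of_mem_replicate hv] at hu
    omega
  | tail hMN step ih =>
    rename_i N C
    obtain ⟨hcard, hchain⟩ := ih
    obtain ⟨v, hvn, hcount, rfl⟩ := step
    have hvN : v ∈ N := Multiset.count_pos.mp (by omega)
    have hsub : ∀ u : ℕ, u ∈ N → u ∈ (v + 1) ::ₘ N.erase v := by
      intro u hu
      rcases eq_or_ne u (v + 1) with rfl | h1
      · exact Multiset.mem_cons_self _ _
      rcases eq_or_ne u v with rfl | h2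
      · refine Multiset.mem_cons_of_mem (Multiset.count_pos.mp ?_)
        rw [Multiset.count_erase_self]
        omega
      · refine Multiset.mem_cons_of_mem (Multiset.count_pos.mp ?_)
        rw [Multiset.count_erase_of_ne h2]
        exact Multiset.count_pos.mpr hu
    constructor
    · rw [Multiset.card_cons, Multiset.card_erase_of_mem hvN, hcard, Nat.pred_eq_sub_one]
      omega
    · intro u w hw hu
      rcases Multiset.mem_cons.mp hw with rfl | hw'
      · -- w = v + 1
        rcases eq_or_lt_of_le (Nat.lt_succ_iff.mp hu) with rfl | huv
        · exact hsub _ hvN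
        · exact hsub _ (hchain u v hvN huv)
      · exact hsub _ (hchain u w (Multiset.mem_of_mem_erase hw') hu)

theorem max_id_implies_all_ids (n : ℕ) (hn : 1 ≤ n) (M : Multiset ℕ)
    (h : Relation.ReflTransGen (IdStep n) (Multiset.replicate n 0) M)
    (hmax : n - 1 ∈ M) :
    M = Multiset.range n := by
  obtain ⟨hcard, hchain⟩ := idstep_invariant n M h
  have hall : ∀ u : ℕ, u < n → u ∈ M := by
    intro u hu
    rcases eq_or_lt_of_le (Nat.le_sub_one_of_lt hu) with rfl | h'
    · exact hmax
    · exact hchain u (n - 1) hmax h'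
  have hle : Multiset.range n ≤ M := by
    rw [Multiset.le_iff_count]
    intro a
    by_cases ha : a < n
    · calc Multiset.count a (Multiset.range n)
          ≤ 1 := Multiset.nodup_iff_count_le_one.mp (Multiset.nodup_range n) a
        _ ≤ Multiset.count a M := Multiset.one_le_count_iff_mem.mpr (hall a ha)
    · rw [Multiset.count_eq_zero_of_notMem (by simpa using ha)]
      omega
  symm
  apply Multiset.eq_of_le_of_card_le hle
  rw [hcard, Multiset.card_range]
end

section
/- Consider a multiset of n natural numbers, all initially 0, evolving by steps in which two equal elements v with v + 1 ≤ n - 1 are selected and one is replaced by v + 1. No infinite sequence of steps exists: the process terminates after exactly n(n-1)/2 steps, at which point the multiset is {0, 1, ..., n-1}. -/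
private lemma countP_succ_aux (M : Multiset ℕ) (v : ℕ) :
    Multiset.countP (fun x => v ≤ x) M
      = M.count v + Multiset.countP (fun x => v + 1 ≤ x) M := by
  induction M using Multiset.induction_on with
  | empty => simp
  | cons a s ih =>
    simp only [Multiset.countP_cons, Multiset.count_cons, ih]
    split_ifs <;> omega

private def IdInv (n : ℕ) (M : Multiset ℕ) : Prop :=
  ∀ k, Multiset.countP (fun x => k ≤ x) M ≤ n - k

private lemma step_countP {n M M'} (h : IdStep n M M') (p : ℕ → Prop) [DecidablePred p] :
    ∃ v, v + 2 ≤ n ∧ 2 ≤ M.count v ∧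
      Multiset.countP p M' + (if p v then 1 else 0)
        = Multiset.countP p M + (if p (v + 1) then 1 else 0) := by
  obtain ⟨v, hv, hc, hM'⟩ := h
  refine ⟨v, by omega, hc, ?_⟩
  have hmem : v ∈ M := Multiset.count_pos.mp (by omega)
  have hM : M = v ::ₘ M.erase v := (Multiset.cons_erase hmem).symm
  rw [hM', Multiset.countP_cons]
  conv_rhs => rw [hM, Multiset.countP_cons]
  ring

private lemma step_card {n M M'} (h : IdStep n M M') : M'.card = M.card := by
  obtain ⟨v, _, hc, hM'⟩ := h
  have hmem : v ∈ M := Multiset.count_pos.mp (by omega)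
  rw [hM', Multiset.card_cons, Multiset.card_erase_of_mem hmem]
  exact Nat.succ_pred_eq_of_pos (Multiset.card_pos.mpr (by rintro rfl; simp at hmem))

private lemma step_sum {n M M'} (h : IdStep n M M') : M'.sum = M.sum + 1 := by
  obtain ⟨v, _, hc, hM'⟩ := h
  have hmem : v ∈ M := Multiset.count_pos.mp (by omega)
  have hM : M = v ::ₘ M.erase v := (Multiset.cons_erase hmem).symm
  rw [hM', Multiset.sum_cons]
  conv_rhs => rw [hM, Multiset.sum_cons]
  ring

private lemma step_inv {n M M'} (h : IdStep n M M') (hI : IdInv n M) : IdInv n M' := by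
  intro k
  obtain ⟨v, hv, hc, heq⟩ := step_countP h (fun x => k ≤ x)
  by_cases h1 : k ≤ v
  · have h2 : k ≤ v + 1 := by omega
    simp [h1, h2] at heq
    have := hI k; omega
  · by_cases h2 : k ≤ v + 1
    · -- k = v + 1
      have hk : k = v + 1 := by omega
      simp [h1, h2] at heq
      have hA := hI v
      have hB := countP_succ_aux M v
      subst hk
      omega
    · simp [h1, h2] at heq
      have := hI k; omega

private lemma count_le_countP (M : Multiset ℕ) (v k : ℕ) (hk : k ≤ v) :
    M.count v ≤ Multiset.countP (fun x => k ≤ x) M := by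
  induction M using Multiset.induction_on with
  | empty => simp
  | cons a s ih =>
    simp only [Multiset.countP_cons, Multiset.count_cons]
    split_ifs <;> omega

theorem id_process_terminates (n : ℕ) (hn : 1 ≤ n) :
    (¬ ∃ f : ℕ → Multiset ℕ, f 0 = Multiset.replicate n 0 ∧
        ∀ i, IdStep n (f i) (f (i + 1))) ∧
    (∀ (f : ℕ → Multiset ℕ) (L : ℕ), f 0 = Multiset.replicate n 0 →
        (∀ i < L, IdStep n (f i) (f (i + 1))) →
        (∀ M', ¬ IdStep n (f L) M') →
        L = n * (n - 1) / 2 ∧ f L = Multiset.range n) := by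
  have inv0 : IdInv n (Multiset.replicate n 0) := by
    intro k
    rcases Nat.eq_zero_or_pos k with hk | hk
    · subst hk
      simp
    · have : Multiset.countP (fun x => k ≤ x) (Multiset.replicate n 0) = 0 := by
        rw [Multiset.countP_eq_zero]
        intro x hx
        rw [Multiset.eq_of_mem_replicate hx]
        omega
      omega
  -- invariants along a partial run
  have run : ∀ (f : ℕ → Multiset ℕ), f 0 = Multiset.replicate n 0 →
      ∀ L, (∀ i < L, IdStep n (f i) (f (i + 1))) →
      (f L).card = n ∧ (f L).sum = L ∧ IdInv n (f L) := by
    intro f hf0 L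
    induction L with
    | zero => intro _; rw [hf0]; refine ⟨by simp, by simp, inv0⟩
    | succ m ih =>
      intro hsteps
      obtain ⟨hcard, hsum, hinv⟩ := ih (fun i hi => hsteps i (by omega))
      have hs := hsteps m (by omega)
      exact ⟨(step_card hs).trans hcard, by rw [step_sum hs, hsum],
        step_inv hs hinv⟩
  constructor
  · rintro ⟨f, hf0, hsteps⟩
    obtain ⟨hcard, hsum, hinv⟩ := run f hf0 (n * (n - 1) + 1) (fun i _ => hsteps i)
    set M := f (n * (n - 1) + 1)
    -- all elements ≤ n - 1
    have hbd : ∀ x ∈ M, x ≤ n - 1 := by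
      intro x hx
      by_contra hcon
      have hn' : n ≤ x := by omega
      have h0 := hinv n
      rw [Nat.sub_self] at h0
      have h0' : Multiset.countP (fun x => n ≤ x) M = 0 := Nat.le_zero.mp h0
      rw [Multiset.countP_eq_zero] at h0'
      exact absurd hn' (h0' x hx)
    have : M.sum ≤ M.card • (n - 1) := Multiset.sum_le_card_nsmul M (n - 1) hbd
    rw [hcard, hsum, smul_eq_mul] at this
    omega
  · intro f L hf0 hsteps hterm
    obtain ⟨hcard, hsum, hinv⟩ := run f hf0 L hsteps
    set M := f L with hM
    -- terminal: counts ≤ 1 for all v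
    have hct : ∀ v, M.count v ≤ 1 := by
      intro v
      by_cases hv : v + 2 ≤ n
      · by_contra hcon
        exact hterm _ ⟨v, by omega, by omega, rfl⟩
      · -- v ≥ n - 1
        have h1 := hinv (n - 1)
        have h2 := count_le_countP M v (n - 1) (by omega)
        omega
    have hnone : ∀ v, n ≤ v → M.count v = 0 := by
      intro v hv
      have h1 := hinv n
      have h2 := count_le_countP M v n hv
      omega
    have hle : M ≤ Multiset.range n := by
      rw [Multiset.le_iff_count]
      intro a
      by_cases ha : a < n
      · have : a ∈ Multiset.range n := Multiset.mem_range.mpr ha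
        have h1 : 1 ≤ (Multiset.range n).count a := Multiset.one_le_count_iff_mem.mpr this
        exact le_trans (hct a) h1
      · rw [hnone a (by omega)]; omega
    have heq : M = Multiset.range n := by
      apply Multiset.eq_of_le_of_card_le hle
      rw [Multiset.card_range, hcard]
    have hsumr : (Multiset.range n).sum = n * (n - 1) / 2 := by
      have : (Multiset.range n).sum = ∑ i ∈ Finset.range n, i := by
        simp [Finset.sum]
      rw [this, Finset.sum_range_id]
    refine ⟨?_, heq⟩
    rw [← hsum, heq, hsumr]
end
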